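/- For n ≥ 3, the chain x_1 < x_2 < ... < x_n consisting of the partitions x_i with unique non-singleton block [i-1] ∪ {n} is a maximal chain of left-modular elements in the lattice (PE_n, ≤_dref); consequently (PE_n, ≤_dref) is a supersolvable lattice. -/

import Mathlib

/-- A set partition of `[n]` (as a setoid on `Fin n`) is noncrossing. -/
def IsNoncrossing {n : ℕ} (x : Setoid (Fin n)) : Prop :=
  ∀ i j k l : Fin n, i < j → j < k → k < l → x.r i k → x.r j l → x.r i j

/-- `B` is a block of the set partition `x`. -/
def IsBlock {n : ℕ} (x : Setoid (Fin n)) (B : Set (Fin n)) : Prop :=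
  ∃ a, B = {b | x.r a b}

/-- The set partition whose unique (possibly) non-singleton block is `S`. -/
def blockSetoid {n : ℕ} (S : Set (Fin n)) : Setoid (Fin n) where
  r a b := a = b ∨ (a ∈ S ∧ b ∈ S)
  iseqv := by
    refine ⟨fun _ => Or.inl rfl, ?_, ?_⟩
    · rintro a b (rfl | ⟨h1, h2⟩)
      · exact Or.inl rfl
      · exact Or.inr ⟨h2, h1⟩
    · rintro a b c (rfl | ⟨h1, h2⟩) h
      · exact h
      · rcases h with rfl | ⟨h3, h4⟩
        · exact Or.inr ⟨h1, h2⟩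
        · exact Or.inr ⟨h1, h4⟩

/-- The element `x_i` of the left-modular chain: its unique non-singleton block is
`[i-1] ∪ {n}` (in 1-based terms), i.e. the elements with value `< i-1` or value `n-1`. -/
def xChain (n i : ℕ) : Setoid (Fin n) :=
  blockSetoid {a : Fin n | a.val + 1 < i ∨ a.val = n - 1}

/-- The noncrossing closure: the smallest noncrossing partition above `x`. -/
def ncClosure {n : ℕ} (x : Setoid (Fin n)) : Setoid (Fin n) :=
  sInf {y | IsNoncrossing y ∧ x ≤ y}

/-- The join of two noncrossing partitions in `NC_n`. -/
def joinNC {n : ℕ} (x y : Setoid (Fin n)) : Setoid (Fin n) :=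
  ncClosure (x ⊔ y)

/-- The join of a set of noncrossing partitions in `NC_n`. -/
def joinSetNC {n : ℕ} (X : Set (Setoid (Fin n))) : Setoid (Fin n) :=
  ncClosure (sSup X)

/-- Membership in `PE_n`: noncrossing, `{n-1, n}` is not a block, and it is not the case
that `{n}` is a singleton block while `1 ∼ n-1`. -/
def PEmem {n : ℕ} (x : Setoid (Fin n)) : Prop :=
  IsNoncrossing x ∧
  ¬ IsBlock x {a : Fin n | a.val = n - 2 ∨ a.val = n - 1} ∧
  ¬ (IsBlock x {a : Fin n | a.val = n - 1} ∧
      ∃ a b : Fin n, a.val = 0 ∧ b.val = n - 2 ∧ x.r a b)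

/-- `m` is the meet of `x` and `y` in the poset `PE_n`. -/
def IsMeetPE {n : ℕ} (x y m : Setoid (Fin n)) : Prop :=
  PEmem m ∧ m ≤ x ∧ m ≤ y ∧ ∀ z, PEmem z → z ≤ x → z ≤ y → z ≤ m

/-- `j` is the join of `x` and `y` in the poset `PE_n`. -/
def IsJoinPE {n : ℕ} (x y j : Setoid (Fin n)) : Prop :=
  PEmem j ∧ x ≤ j ∧ y ≤ j ∧ ∀ z, PEmem z → x ≤ z → y ≤ z → j ≤ z

/-- `x ⋖ y` in `PE_n`. -/
def CovPE {n : ℕ} (x y : Setoid (Fin n)) : Prop :=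
  PEmem x ∧ PEmem y ∧ x < y ∧ ∀ z, PEmem z → x < z → ¬ z < y

/-- The atoms of `NC_n`: partitions `a_{i,j}` with unique non-singleton block `{i, j}`. -/
def IsAtomNC {n : ℕ} (a : Setoid (Fin n)) : Prop :=
  ∃ i j : Fin n, i < j ∧ a = blockSetoid {i, j}

/-- The partial order `≼` on atoms of `NC_n` induced by the classes
`A_j = {a : a ≤ x_j and a ≰ x_{j-1}}`. -/
def atomPrec {n : ℕ} (a b : Setoid (Fin n)) : Prop :=
  ∃ i j : ℕ, 1 ≤ i ∧ i < j ∧ j ≤ n - 1 ∧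
    (a ≤ xChain n i ∧ ¬ a ≤ xChain n (i - 1)) ∧
    (b ≤ xChain n j ∧ ¬ b ≤ xChain n (j - 1))

/-- A set of atoms of `NC_n` is bounded below (BB). -/
def IsBBset {n : ℕ} (X : Set (Setoid (Fin n))) : Prop :=
  ∀ d ∈ X, ∃ a, IsAtomNC a ∧ atomPrec a d ∧ a < joinSetNC X

/-- A set of atoms of `NC_n` is NBB: no nonempty subset is bounded below. -/
def IsNBBset {n : ℕ} (X : Set (Setoid (Fin n))) : Prop :=
  ∀ Y ⊆ X, Y.Nonempty → ¬ IsBBset Y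

/-- `X` is an NBB base for the top element of `NC_n`. -/
def IsNBBBaseTop {n : ℕ} (X : Set (Setoid (Fin n))) : Prop :=
  (∀ a ∈ X, IsAtomNC a) ∧ IsNBBset X ∧ joinSetNC X = ⊤

/-- The graph `τ(X)` on vertex set `[n]` associated with a set `X` of atoms:
`i` and `j` are adjacent iff `a_{i,j} ∈ X`. -/
def atomGraph {n : ℕ} (X : Set (Setoid (Fin n))) : SimpleGraph (Fin n) where
  Adj i j := i ≠ j ∧ blockSetoid ({i, j} : Set (Fin n)) ∈ X
  symm := ⟨by
    rintro i j ⟨hne, hm⟩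
    exact ⟨hne.symm, by rwa [Set.pair_comm]⟩⟩
  loopless := ⟨fun i h => h.1 rfl⟩

/-- The parking label of the cover `x ⋖ y` is `p`: `y` merges blocks `B₁, B₂` of `x` with
`min B₁ < min B₂`, and `p = max { j ∈ B₁ : j ≤ i for all i ∈ B₂ }`. -/
def ParkingLabelIs {n : ℕ} (x y : Setoid (Fin n)) (p : Fin n) : Prop :=
  ∃ B₁ B₂ : Set (Fin n), IsBlock x B₁ ∧ IsBlock x B₂ ∧ B₁ ≠ B₂ ∧
    IsBlock y (B₁ ∪ B₂) ∧
    (∃ a ∈ B₁, ∀ b ∈ B₂, a < b) ∧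
    p ∈ B₁ ∧ (∀ i ∈ B₂, p ≤ i) ∧ (∀ j ∈ B₁, (∀ i ∈ B₂, j ≤ i) → j ≤ p)

/-- The label of the cover `w ⋖ z` in the `S_n` EL-labeling of `PE_n` coming from the
left-modular chain: `λ(w,z) = min { i-1 : x_i ≰ w and x_i ≤ z }`. -/
def LabelIs (n : ℕ) (w z : Setoid (Fin n)) (v : ℕ) : Prop :=
  ∃ i : ℕ, 1 ≤ i ∧ i ≤ n ∧ i - 1 = v ∧ (¬ xChain n i ≤ w ∧ xChain n i ≤ z) ∧
    ∀ j : ℕ, 1 ≤ j → j ≤ n → (¬ xChain n j ≤ w ∧ xChain n j ≤ z) → i ≤ j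

/-- The sequence of edge labels along a (saturated) chain, recorded as a list. -/
def chainLabels {α Λ : Type*} (lab : α → α → Λ) (c : List α) : List Λ :=
  List.zipWith lab c c.tail

/-- `c` is a saturated chain from `a` to `b` with respect to the cover relation `cov`. -/
def IsSatChainList {α : Type*} (cov : α → α → Prop) (a b : α) (c : List α) : Prop :=
  c.head? = some a ∧ c.getLast? = some b ∧ c.Chain' cov

/-- A chain is rising if its label sequence is strictly increasing. -/
def RisingChain {α Λ : Type*} [LT Λ] (lab : α → α → Λ) (c : List α) : Prop :=
  (chainLabels lab c).Chain' (· < ·)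

/-- `lab` is an EL-labeling with respect to the cover relation `cov` and order `le`:
every interval has a unique rising maximal chain, which is lexicographically least. -/
def IsELLabeling {α Λ : Type*} [PartialOrder Λ] (cov : α → α → Prop) (le : α → α → Prop)
    (lab : α → α → Λ) : Prop :=
  ∀ a b, le a b → ∃ c : List α, IsSatChainList cov a b c ∧ RisingChain lab c ∧
    (∀ c', IsSatChainList cov a b c' → RisingChain lab c' → c' = c) ∧
    (∀ c', IsSatChainList cov a b c' → c' ≠ c →
      List.Lex (· < ·) (chainLabels lab c) (chainLabels lab c'))


-- ===== auxiliary lemmas =====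

-- ===================== aux =====================

lemma blockSetoid_rel {n : ℕ} {S : Set (Fin n)} {a b : Fin n} :
    (blockSetoid S).r a b ↔ a = b ∨ (a ∈ S ∧ b ∈ S) := Iff.rfl

lemma xChain_rel {n i : ℕ} {a b : Fin n} :
    (xChain n i).r a b ↔
      a = b ∨ ((a.val + 1 < i ∨ a.val = n - 1) ∧ (b.val + 1 < i ∨ b.val = n - 1)) := Iff.rfl

lemma blockSetoid_nc {n : ℕ} (S : Set (Fin n)) : IsNoncrossing (blockSetoid S) := by
  rintro i j k l hij hjk hkl (rfl | ⟨h1, h2⟩) h2'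
  · exact absurd rfl (ne_of_lt (hij.trans hjk))
  · rcases h2' with rfl | ⟨h3, h4⟩
    · exact absurd rfl (ne_of_lt (hjk.trans hkl))
    · exact Or.inr ⟨h1, h3⟩

lemma xChain_one (n : ℕ) : xChain n 1 = ⊥ := by
  apply Setoid.ext
  intro a b
  constructor
  · rintro (rfl | ⟨ha, hb⟩)
    · rfl
    · rcases ha with h | h
      · omega
      · rcases hb with h' | h'
        · omega
        · exact Fin.ext (h.trans h'.symm)
  · rintro rfl
    exact Or.inl rfl

lemma xChain_top (n : ℕ) (hn : 1 ≤ n) : xChain n n = ⊤ := by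
  apply Setoid.ext
  intro a b
  simp only [Setoid.top_def, Pi.top_apply, Prop.top_eq_true, iff_true]
  refine Or.inr ⟨?_, ?_⟩ <;> · show _ + 1 < n ∨ _ = n - 1; omega

lemma xChain_mono {n i j : ℕ} (h : i ≤ j) : xChain n i ≤ xChain n j := by
  rintro a b (rfl | ⟨ha, hb⟩)
  · exact Or.inl rfl
  · simp only [Set.mem_setOf_eq] at ha hb
    refine Or.inr ⟨?_, ?_⟩
    · show a.val + 1 < j ∨ a.val = n - 1
      rcases ha with h' | h' <;> omega
    · show b.val + 1 < j ∨ b.val = n - 1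
      rcases hb with h' | h' <;> omega

lemma le_ncClosure {n : ℕ} (x : Setoid (Fin n)) : x ≤ ncClosure x :=
  le_sInf fun _ hy => hy.2

lemma ncClosure_le {n : ℕ} {x w : Setoid (Fin n)} (hw : IsNoncrossing w) (hxw : x ≤ w) :
    ncClosure x ≤ w := sInf_le ⟨hw, hxw⟩

lemma ncClosure_nc {n : ℕ} (x : Setoid (Fin n)) : IsNoncrossing (ncClosure x) := by
  intro i j k l hij hjk hkl hik hjl
  intro r hr
  exact hr.1 i j k l hij hjk hkl (hik r hr) (hjl r hr)

lemma ncClosure_self {n : ℕ} {x : Setoid (Fin n)} (hx : IsNoncrossing x) : ncClosure x = x :=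
  le_antisymm (ncClosure_le hx le_rfl) (le_ncClosure x)

/-- The `y`-saturation of `S`. -/
def satS {n : ℕ} (y : Setoid (Fin n)) (S : Set (Fin n)) : Set (Fin n) :=
  {c | ∃ s ∈ S, y.r c s}

/-- `y` with all blocks meeting `S` merged into one. -/
def wSetoid {n : ℕ} (y : Setoid (Fin n)) (S : Set (Fin n)) : Setoid (Fin n) where
  r a b := y.r a b ∨ (a ∈ satS y S ∧ b ∈ satS y S)
  iseqv := by
    refine ⟨fun a => Or.inl (y.refl' a), ?_, ?_⟩
    · rintro a b (h | ⟨h1, h2⟩)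
      · exact Or.inl (y.symm' h)
      · exact Or.inr ⟨h2, h1⟩
    · rintro a b c (hab | ⟨ha, hb⟩) (hbc | ⟨hb', hc⟩)
      · exact Or.inl (y.trans' hab hbc)
      · exact Or.inr ⟨(hb'.imp fun s hs => ⟨hs.1, y.trans' hab hs.2⟩), hc⟩
      · exact Or.inr ⟨ha, (hb.imp fun s hs => ⟨hs.1, y.trans' (y.symm' hbc) hs.2⟩)⟩
      · exact Or.inr ⟨ha, hc⟩

lemma wSetoid_rel {n : ℕ} {y : Setoid (Fin n)} {S : Set (Fin n)} {a b : Fin n} :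
    (wSetoid y S).r a b ↔ y.r a b ∨ (a ∈ satS y S ∧ b ∈ satS y S) := Iff.rfl

lemma le_wSetoid_left {n : ℕ} (y : Setoid (Fin n)) (S : Set (Fin n)) : y ≤ wSetoid y S :=
  fun _ _ h => Or.inl h

lemma mem_satS_of_mem {n : ℕ} {y : Setoid (Fin n)} {S : Set (Fin n)} {a : Fin n}
    (h : a ∈ S) : a ∈ satS y S := ⟨a, h, y.refl' a⟩

lemma le_wSetoid_right {n : ℕ} (y : Setoid (Fin n)) (S : Set (Fin n)) :
    blockSetoid S ≤ wSetoid y S := by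
  rintro a b (rfl | ⟨ha, hb⟩)
  · exact Or.inl (y.refl' a)
  · exact Or.inr ⟨mem_satS_of_mem ha, mem_satS_of_mem hb⟩

/-- Core combinatorial lemma: if `S` is downward closed apart from possibly containing `n-1`,
then merging the `y`-saturation of `S` preserves noncrossingness. -/
lemma wSetoid_nc {n : ℕ} {y : Setoid (Fin n)} {S : Set (Fin n)} (hy : IsNoncrossing y)
    (hS : ∀ s ∈ S, s.val ≠ n - 1 → ∀ t : Fin n, t < s → t ∈ S) :
    IsNoncrossing (wSetoid y S) := by
  rintro a b c d hab hbc hcd (hac | ⟨haS, hcS⟩) (hbd | ⟨hbS, hdS⟩)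
  · exact Or.inl (hy a b c d hab hbc hcd hac hbd)
  · -- y.r a c and b ∈ satS
    obtain ⟨s, hs, hbs⟩ := hbS
    rcases lt_trichotomy s a with h | rfl | h
    · -- s < a < b < c : Rel s b, Rel a c ⇒ Rel s a ⇒ a ∈ satS
      have := hy s a b c h hab hbc (y.symm' hbs) hac
      exact Or.inr ⟨⟨s, hs, y.symm' this⟩, ⟨s, hs, hbs⟩⟩
    · exact Or.inl (y.symm' hbs)
    · rcases lt_trichotomy s c with h' | rfl | h'
      · -- a < s < c , s ≠ n-1 since s < c < d ≤ n-1, so a ∈ S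
        have hsne : s.val ≠ n - 1 := by
          have := d.isLt; have h1 : s.val < c.val := h'; have h2 : c.val < d.val := hcd; omega
        exact Or.inr ⟨mem_satS_of_mem (hS s hs hsne a h), ⟨s, hs, hbs⟩⟩
      · exact Or.inl (y.trans' hac (y.symm' hbs))
      · -- a < b < c < s : Rel a c, Rel b s ⇒ Rel a b
        exact Or.inl (hy a b c s hab hbc h' hac hbs)
  · -- a, c ∈ satS, y.r b d : show b ∈ satS
    obtain ⟨s, hs, hcs⟩ := hcS
    rcases lt_trichotomy s b with h | rfl | h
    · -- s < b < c < d : Rel s c, Rel b d ⇒ Rel s b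
      have := hy s b c d h hbc hcd (y.symm' hcs) hbd
      exact Or.inr ⟨haS, ⟨s, hs, y.symm' this⟩⟩
    · exact Or.inr ⟨haS, mem_satS_of_mem hs⟩
    · rcases lt_trichotomy s d with h' | rfl | h'
      · -- b < s < d, s ≠ n-1, so b ∈ S
        have hsne : s.val ≠ n - 1 := by
          have := d.isLt; have h1 : s.val < d.val := h'; omega
        exact Or.inr ⟨haS, mem_satS_of_mem (hS s hs hsne b h)⟩
      · -- s = d : y.r c d and y.r b d ⇒ y.r b c
        have hbcy : y.r b c := y.trans' hbd (y.symm' hcs)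
        exact Or.inr ⟨haS, ⟨s, hs, y.trans' hbcy hcs⟩⟩
      · -- b < c < d < s : Rel b d, Rel c s ⇒ Rel b c
        have hbcy : y.r b c := hy b c d s hbc hcd h' hbd hcs
        exact Or.inr ⟨haS, ⟨s, hs, y.trans' hbcy hcs⟩⟩
  · exact Or.inr ⟨haS, hbS⟩

lemma xChain_S_prop (n i : ℕ) :
    ∀ s ∈ {a : Fin n | a.val + 1 < i ∨ a.val = n - 1}, s.val ≠ n - 1 →
      ∀ t : Fin n, t < s → t ∈ {a : Fin n | a.val + 1 < i ∨ a.val = n - 1} := by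
  intro s hs hne t ht
  simp only [Set.mem_setOf_eq] at hs ⊢
  have : t.val < s.val := ht
  rcases hs with h | h
  · omega
  · omega

section PE
variable {n : ℕ}

/-- PEmem of the chain elements. -/
lemma PEmem_xChain (hn : 3 ≤ n) {i : ℕ} (h1 : 1 ≤ i) (h2 : i ≤ n) : PEmem (xChain n i) := by
  have hN1 : n - 1 < n := by omega
  have hN2 : n - 2 < n := by omega
  set N1 : Fin n := ⟨n - 1, hN1⟩ with hN1d
  set N2 : Fin n := ⟨n - 2, hN2⟩ with hN2d
  set Z : Fin n := ⟨0, by omega⟩ with hZd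
  refine ⟨blockSetoid_nc _, ?_, ?_⟩
  · rintro ⟨a, ha⟩
    rcases eq_or_lt_of_le h2 with heq | hlt
    · -- i = n : Z is related to a
      have hrel : (xChain n i).r a Z := by
        rw [heq, xChain_top n (by omega)]; trivial
      have : Z ∈ {b : Fin n | b.val = n - 2 ∨ b.val = n - 1} := by rw [ha]; exact hrel
      simp only [Set.mem_setOf_eq, hZd] at this
      omega
    · -- i < n : N2 is a singleton
      have hN2mem : N2 ∈ {b : Fin n | b.val = n - 2 ∨ b.val = n - 1} := Or.inl rfl
      have hN1mem : N1 ∈ {b : Fin n | b.val = n - 2 ∨ b.val = n - 1} := Or.inr rfl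
      rw [ha] at hN1mem hN2mem
      have hN2S : N2 ∉ {a : Fin n | a.val + 1 < i ∨ a.val = n - 1} := by
        simp only [Set.mem_setOf_eq, hN2d]; omega
      rcases hN2mem with rfl | ⟨_, h⟩
      · rcases hN1mem with h | ⟨h, _⟩
        · exact absurd (congrArg Fin.val h) (by simp [hN1d, hN2d]; omega)
        · exact hN2S h
      · exact hN2S h
  · rintro ⟨hblk, a, b, ha0, hbn2, hab⟩
    rcases eq_or_lt_of_le h2 with heq | hlt
    · -- i = n : refute the singleton block {n-1}
      obtain ⟨c, hc⟩ := hblk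
      have hrel : (xChain n i).r c Z := by
        rw [heq, xChain_top n (by omega)]; trivial
      have : Z ∈ {b : Fin n | b.val = n - 1} := by rw [hc]; exact hrel
      simp only [Set.mem_setOf_eq, hZd] at this
      omega
    · -- i < n : refute Rel a b with b.val = n-2
      rcases hab with heq | ⟨_, hbS⟩
      · rw [heq] at ha0; omega
      · simp only [Set.mem_setOf_eq, hbn2] at hbS; omega

/-- P2 : the meet of `x_i` with a PE element is PE. -/
lemma PEmem_xChain_inf (hn : 3 ≤ n) {i : ℕ} (h2 : i ≤ n) {z : Setoid (Fin n)}
    (hz : PEmem z) : PEmem (xChain n i ⊓ z) := by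
  rcases eq_or_lt_of_le h2 with heq | hlt
  · rw [heq, xChain_top n (by omega), top_inf_eq]; exact hz
  have hN1 : n - 1 < n := by omega
  have hN2 : n - 2 < n := by omega
  set N1 : Fin n := ⟨n - 1, hN1⟩ with hN1d
  set N2 : Fin n := ⟨n - 2, hN2⟩ with hN2d
  have hN2S : N2 ∉ {a : Fin n | a.val + 1 < i ∨ a.val = n - 1} := by
    simp only [Set.mem_setOf_eq, hN2d]; omega
  refine ⟨?_, ?_, ?_⟩
  · intro a b c d h1 h2 h3 hik hjl
    exact ⟨blockSetoid_nc _ a b c d h1 h2 h3 hik.1 hjl.1, hz.1 a b c d h1 h2 h3 hik.2 hjl.2⟩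
  · rintro ⟨a, ha⟩
    have hN2mem : N2 ∈ {b : Fin n | b.val = n - 2 ∨ b.val = n - 1} := Or.inl rfl
    have hN1mem : N1 ∈ {b : Fin n | b.val = n - 2 ∨ b.val = n - 1} := Or.inr rfl
    rw [ha] at hN1mem hN2mem
    -- (x ⊓ z).r a N2 forces a = N2, then Rel N2 N1 is impossible
    rcases hN2mem.1 with rfl | ⟨_, h⟩
    · rcases hN1mem.1 with h | ⟨h, _⟩
      · exact absurd (congrArg Fin.val h) (by simp [hN1d, hN2d]; omega)
      · exact hN2S h
    · exact hN2S h
  · rintro ⟨_, a, b, ha0, hbn2, hab⟩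
    rcases hab.1 with heq | ⟨_, hbS⟩
    · rw [heq] at ha0; omega
    · simp only [Set.mem_setOf_eq, hbn2] at hbS; omega

/-- P1 : the nc-closure of `y ⊔ x_i` is PE, for `y` PE. -/
lemma PEmem_ncClosure_sup (hn : 3 ≤ n) {i : ℕ} (h1 : 1 ≤ i) (h2 : i ≤ n)
    {y : Setoid (Fin n)} (hy : PEmem y) : PEmem (ncClosure (y ⊔ xChain n i)) := by
  rcases eq_or_lt_of_le h1 with heq | h1'
  · rw [← heq, xChain_one, sup_bot_eq, ncClosure_self hy.1]; exact hy
  -- now 2 ≤ i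
  have hN1 : n - 1 < n := by omega
  set v := ncClosure (y ⊔ xChain n i) with hv
  set N1 : Fin n := ⟨n - 1, hN1⟩ with hN1d
  set Z : Fin n := ⟨0, by omega⟩ with hZd
  have hkey : v.r Z N1 := by
    have hx : xChain n i ≤ v := le_trans le_sup_right (le_ncClosure _)
    exact hx (Or.inr ⟨Or.inl (by simp [hZd]; omega), Or.inr rfl⟩)
  refine ⟨ncClosure_nc _, ?_, ?_⟩
  · rintro ⟨a, ha⟩
    have hN1mem : N1 ∈ {b : Fin n | b.val = n - 2 ∨ b.val = n - 1} := Or.inr rfl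
    rw [ha] at hN1mem
    have hZmem : Z ∈ {b : Fin n | v.r a b} := v.trans' hN1mem (v.symm' hkey)
    rw [← ha] at hZmem
    simp only [Set.mem_setOf_eq, hZd] at hZmem
    omega
  · rintro ⟨⟨a, ha⟩, _⟩
    have hN1mem : N1 ∈ {b : Fin n | b.val = n - 1} := rfl
    rw [ha] at hN1mem
    have hZmem : Z ∈ {b : Fin n | v.r a b} := v.trans' hN1mem (v.symm' hkey)
    rw [← ha] at hZmem
    simp only [Set.mem_setOf_eq, hZd] at hZmem
    omega

end PE

lemma xChain_lt {n : ℕ} (hn : 3 ≤ n) {i j : ℕ} (h1 : 1 ≤ i) (hij : i < j) (hj : j ≤ n) :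
    xChain n i < xChain n j := by
  refine lt_of_le_of_ne (xChain_mono (le_of_lt hij)) ?_
  intro heq
  set I1 : Fin n := ⟨i - 1, by omega⟩ with hI1
  set N1 : Fin n := ⟨n - 1, by omega⟩ with hN1
  have hrelj : (xChain n j).r I1 N1 :=
    Or.inr ⟨Or.inl (by simp only [hI1]; omega), Or.inr rfl⟩
  rw [← heq] at hrelj
  rcases hrelj with h | ⟨hI1m, _⟩
  · have := congrArg Fin.val h
    simp only [hI1, hN1] at this
    omega
  · simp only [hI1, Set.mem_setOf_eq] at hI1m
    omega

lemma sandwich {n : ℕ} (hn : 3 ≤ n) {j : ℕ} (h1 : 1 ≤ j) (hj : j < n) {w : Setoid (Fin n)}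
    (hw1 : xChain n j ≤ w) (hw2 : w ≤ xChain n (j + 1)) :
    w = xChain n j ∨ w = xChain n (j + 1) := by
  set J1 : Fin n := ⟨j - 1, by omega⟩ with hJ1
  set N1 : Fin n := ⟨n - 1, by omega⟩ with hN1
  by_cases h : w.r J1 N1
  · right
    refine le_antisymm hw2 ?_
    have key : ∀ c : Fin n, (c.val + 1 < j + 1 ∨ c.val = n - 1) → w.r c N1 := by
      intro c hc
      rcases hc with hc | hc
      · by_cases hc' : c.val + 1 < j
        · exact hw1 (Or.inr ⟨Or.inl hc', Or.inr rfl⟩)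
        · have hcJ : c = J1 := Fin.ext (by simp only [hJ1]; omega)
          rw [hcJ]; exact h
      · have hcN : c = N1 := Fin.ext (by simp only [hN1]; omega)
        rw [hcN]
    rintro a b (rfl | ⟨ha, hb⟩)
    · exact w.refl' a
    · exact w.trans' (key a ha) (w.symm' (key b hb))
  · left
    refine le_antisymm ?_ hw1
    intro a b hab
    rcases hw2 hab with heq | ⟨ha, hb⟩
    · exact Or.inl heq
    · by_cases hab' : a = b
      · exact Or.inl hab'
      have main : ∀ c d : Fin n, w.r c d → c ≠ d →
          (c.val + 1 < j + 1 ∨ c.val = n - 1) → (d.val + 1 < j + 1 ∨ d.val = n - 1) →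
          (c.val + 1 < j ∨ c.val = n - 1) := by
        intro c d hcd hne hcS hdS
        rcases hcS with hcS | hcS
        · by_cases hc' : c.val + 1 < j
          · exact Or.inl hc'
          · have hcJ : c = J1 := Fin.ext (by simp only [hJ1]; omega)
            exfalso
            rcases hdS with hdS | hdS
            · by_cases hd' : d.val + 1 < j
              · exact h (w.trans' (hcJ ▸ hcd)
                  (hw1 (Or.inr ⟨Or.inl hd', Or.inr rfl⟩)))
              · exact hne (hcJ.trans (Fin.ext (by simp only [hJ1]; omega)).symm)
            · have hdN : d = N1 := Fin.ext (by simp only [hN1]; omega)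
              exact h (hcJ ▸ hdN ▸ hcd)
        · exact Or.inr hcS
      exact Or.inr ⟨main a b hab hab' ha hb, main b a (w.symm' hab) (Ne.symm hab') hb ha⟩

/-- For `n ≥ 3`, the chain `x_1 < x_2 < ... < x_n` is a maximal chain of
left-modular elements of the (graded) lattice `(PE_n, ≤_dref)`; consequently `PE_n` is a
supersolvable lattice.  Left-modularity of `x_i` is expressed via the lattice operations
of `PE_n`: for `y ≤ z` in `PE_n`, `(y ∨ x_i) ∧ z = y ∨ (x_i ∧ z)`. -/
theorem PE_supersolvable (n : ℕ) (hn : 3 ≤ n) :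
    (∀ i, 1 ≤ i → i ≤ n → PEmem (xChain n i)) ∧
    (∀ i j, 1 ≤ i → i < j → j ≤ n → xChain n i < xChain n j) ∧
    IsMaxChain (fun a b : {s : Setoid (Fin n) // PEmem s} => a.val ≤ b.val)
      {x : {s : Setoid (Fin n) // PEmem s} | ∃ i, 1 ≤ i ∧ i ≤ n ∧ x.val = xChain n i} ∧
    (∀ i, 1 ≤ i → i ≤ n → ∀ y z : Setoid (Fin n), PEmem y → PEmem z → y ≤ z →
      ∀ q m m' q' : Setoid (Fin n), IsJoinPE y (xChain n i) q → IsMeetPE q z m →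
        IsMeetPE (xChain n i) z m' → IsJoinPE y m' q' → m = q') := by
  refine ⟨fun i h1 h2 => PEmem_xChain hn h1 h2,
    fun i j h1 hij hj => xChain_lt hn h1 hij hj, ⟨?_, ?_⟩, ?_⟩
  · -- the set is a chain
    rintro a ⟨i, hi1, hi2, hia⟩ b ⟨j, hj1, hj2, hjb⟩ hne
    rcases le_total i j with h | h
    · exact Or.inl (by show a.val ≤ b.val; rw [hia, hjb]; exact xChain_mono h)
    · exact Or.inr (by show b.val ≤ a.val; rw [hia, hjb]; exact xChain_mono h)
  · -- maximality
    rintro t ht hsub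
    refine Set.Subset.antisymm hsub fun w hw => ?_
    classical
    obtain ⟨j, ⟨hj1, hjle⟩, hjn, hgt⟩ :
        ∃ j, (1 ≤ j ∧ xChain n j ≤ w.val) ∧ j ≤ n ∧
          ∀ k, j < k → k ≤ n → ¬ (1 ≤ k ∧ xChain n k ≤ w.val)
 := by
      refine ⟨Nat.findGreatest (fun j => 1 ≤ j ∧ xChain n j ≤ w.val) n, ?_,
        Nat.findGreatest_le n, fun k hk hk' hPk => Nat.findGreatest_is_greatest hk hk' hPk⟩
      exact Nat.findGreatest_spec (P := fun j => 1 ≤ j ∧ xChain n j ≤ w.val) (m := 1)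
        (by omega) ⟨le_refl 1, by rw [xChain_one]; exact bot_le⟩
    rcases eq_or_lt_of_le hjn with heq | hlt
    · have hwt : w.val = xChain n n :=
        le_antisymm (by rw [xChain_top n (by omega)]; exact le_top) (heq ▸ hjle)
      exact ⟨n, by omega, le_refl n, hwt⟩
    · have hnot : ¬ xChain n (j + 1) ≤ w.val := fun hc =>
        hgt (j + 1) (by omega) (by omega) ⟨by omega, hc⟩
      have hc1PE : PEmem (xChain n (j + 1)) := PEmem_xChain hn (by omega) (by omega)
      have hc1C : (⟨xChain n (j + 1), hc1PE⟩ : {s : Setoid (Fin n) // PEmem s}) ∈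
          {x : {s : Setoid (Fin n) // PEmem s} | ∃ i, 1 ≤ i ∧ i ≤ n ∧ x.val = xChain n i} :=
        ⟨j + 1, by omega, by omega, rfl⟩
      by_cases hwc : w = ⟨xChain n (j + 1), hc1PE⟩
      · exact hwc ▸ hc1C
      · rcases ht hw (hsub hc1C) hwc with hle | hle
        · rcases sandwich hn hj1 hlt hjle hle with h | h
          · exact ⟨j, hj1, by omega, h⟩
          · exact ⟨j + 1, by omega, by omega, h⟩
        · exact absurd hle hnot
  · -- left-modularity
    intro i h1i hin y z hy hz hyz q m m' q' hq hm hm' hq'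
    obtain ⟨hqPE, hyq, hxq, hqmin⟩ := hq
    obtain ⟨hmPE, hmq, hmz, hmmax⟩ := hm
    obtain ⟨hm'PE, hm'x, hm'z, hm'max⟩ := hm'
    obtain ⟨hq'PE, hyq', hm'q', hq'min⟩ := hq'
    have hym : y ≤ m := hmmax y hy hyq hyz
    have hm'm : m' ≤ m := hmmax m' hm'PE (le_trans hm'x hxq) hm'z
    have hq'm : q' ≤ m := hq'min m hmPE hym hm'm
    have hm'eq : m' = xChain n i ⊓ z :=
      le_antisymm (le_inf hm'x hm'z)
        (hm'max _ (PEmem_xChain_inf hn hin hz) inf_le_left inf_le_right)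
    have hmq' : m ≤ q' := by
      have hvPE : PEmem (ncClosure (y ⊔ xChain n i)) := PEmem_ncClosure_sup hn h1i hin hy
      have hqv : q ≤ ncClosure (y ⊔ xChain n i) :=
        hqmin _ hvPE (le_trans le_sup_left (le_ncClosure _))
          (le_trans le_sup_right (le_ncClosure _))
      have hvw : ncClosure (y ⊔ xChain n i) ≤
          wSetoid y {a : Fin n | a.val + 1 < i ∨ a.val = n - 1} :=
        ncClosure_le (wSetoid_nc hy.1 (xChain_S_prop n i))
          (sup_le (le_wSetoid_left y _) (le_wSetoid_right y _))
      intro a b hab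
      have hwab : (wSetoid y {a : Fin n | a.val + 1 < i ∨ a.val = n - 1}).r a b :=
        hvw (hqv (hmq hab))
      have hzab : z.r a b := hmz hab
      rcases hwab with hyab | ⟨⟨sa, hsa, hasa⟩, ⟨sb, hsb, hbsb⟩⟩
      · exact hyq' hyab
      · have hzs : z.r sa sb := z.trans' (z.symm' (hyz hasa)) (z.trans' hzab (hyz hbsb))
        have h2 : (xChain n i ⊓ z).r sa sb := ⟨Or.inr ⟨hsa, hsb⟩, hzs⟩
        rw [← hm'eq] at h2
        exact q'.trans' (hyq' hasa) (q'.trans' (hm'q' h2) (q'.symm' (hyq' hbsb)))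
    exact le_antisymm hmq' hq'm
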